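/- Key combinatorial lemma for the LASSO lower bound: Let τ = 1/1000, let w, p ≥ 1 be integers, and let x_1, …, x_w ∈ {−1, 1}^p. Let W ⊆ {1, …, p} with |W| ≥ (1 − τ)·p and s : {1, …, p} → {−1, 1} be such that x_i(j) = s(j) for every i ∈ {1, …, w} and every j ∈ W (W is a set of consensus coordinates with signs s). Let k be a real number with k ≥ τ·w·p, and let θ ∈ ℝ^p satisfy ‖θ‖₁ ≤ 1 and Σ_{i=1}^w (⟨x_i, θ⟩ − 1)² + k·‖θ‖₂² < 1.1·τ·w. Then |{ j ∈ W : s(j)·θ(j) > 0 }| ≥ (3/4)·p. -/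
import Mathlib


open scoped BigOperators Classical

set_option maxHeartbeats 1000000 in
/-- Key combinatorial lemma for the LASSO lower bound: a unit-ℓ₁-norm model with small
regularized loss must agree in sign with the consensus signs on at least `(3/4)·p`
coordinates of `W`. -/
theorem lasso_lower_bound_sign_agreement {w p : ℕ} (hw : 1 ≤ w) (hp : 1 ≤ p)
    (τ : ℝ) (hτ : τ = 1 / 1000)
    (x : Fin w → Fin p → ℝ) (hx : ∀ i j, x i j = 1 ∨ x i j = -1)
    (W : Finset (Fin p)) (hW : (1 - τ) * p ≤ W.card)
    (s : Fin p → ℝ) (hs : ∀ j, s j = 1 ∨ s j = -1)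
    (hcons : ∀ i, ∀ j ∈ W, x i j = s j)
    (k : ℝ) (hk : τ * w * p ≤ k)
    (θ : Fin p → ℝ) (hθ1 : ∑ j, |θ j| ≤ 1)
    (hloss : ∑ i, (∑ j, x i j * θ j - 1) ^ 2 + k * ∑ j, (θ j) ^ 2 < 1.1 * τ * w) :
    (3 : ℝ) / 4 * p ≤ ((W.filter fun j => 0 < s j * θ j).card : ℝ) := by
  subst hτ
  by_contra hcontra
  push_neg at hcontra
  set G := W.filter fun j => 0 < s j * θ j with hGdef
  have hp' : (1:ℝ) ≤ p := by exact_mod_cast hp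
  have hw' : (1:ℝ) ≤ w := by exact_mod_cast hw
  have hpp : (0:ℝ) < p := by linarith
  have hsq : (0:ℝ) ≤ ∑ j, (θ j)^2 := Finset.sum_nonneg fun j _ => sq_nonneg _
  have hlsum : (0:ℝ) ≤ ∑ i, (∑ j, x i j * θ j - 1)^2 :=
    Finset.sum_nonneg fun i _ => sq_nonneg _
  have hk0 : (0:ℝ) < k := lt_of_lt_of_le (by positivity) hk
  have hkθ : (0:ℝ) ≤ k * ∑ j, (θ j)^2 := mul_nonneg hk0.le hsq
  -- ℓ₂ bound: ∑ θ² < 1.1 / p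
  have hθ2 : ∑ j, (θ j)^2 < 1.1 / p := by
    have h1 : k * ∑ j, (θ j)^2 < 1.1 * (1/1000) * w := by linarith
    have h2 : (1/1000 : ℝ) * w * p * ∑ j, (θ j)^2 ≤ k * ∑ j, (θ j)^2 :=
      mul_le_mul_of_nonneg_right hk hsq
    have h3 : (p : ℝ) * ∑ j, (θ j)^2 < 1.1 := by nlinarith
    rw [lt_div_iff₀ hpp]; linarith
  -- a sample with small loss
  have hexists : ∃ i, (∑ j, x i j * θ j - 1)^2 < 1.1 * (1/1000) := by
    by_contra h
    push_neg at h
    have hge : (w : ℝ) * (1.1 * (1/1000)) ≤ ∑ i, (∑ j, x i j * θ j - 1)^2 := by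
      calc (w:ℝ) * (1.1 * (1/1000)) = ∑ _i : Fin w, (1.1 * (1/1000) : ℝ) := by
            simp [Finset.sum_const, mul_comm]
        _ ≤ _ := Finset.sum_le_sum fun i _ => h i
    linarith
  obtain ⟨i₀, hi₀⟩ := hexists
  set S := ∑ j, x i₀ j * θ j with hSdef
  have hS : (0.9668 : ℝ) < S := by nlinarith [sq_nonneg (S - 1)]
  -- split the inner product
  have hsplit : S = ∑ j ∈ W, s j * θ j + ∑ j ∈ Wᶜ, x i₀ j * θ j := by
    rw [hSdef, ← Finset.sum_add_sum_compl W]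
    congr 1
    exact Finset.sum_congr rfl fun j hj => by rw [hcons i₀ j hj]
  -- off-consensus part bound
  have hoff : |∑ j ∈ Wᶜ, x i₀ j * θ j| ≤ ∑ j ∈ Wᶜ, |θ j| := by
    calc |∑ j ∈ Wᶜ, x i₀ j * θ j| ≤ ∑ j ∈ Wᶜ, |x i₀ j * θ j| :=
          Finset.abs_sum_le_sum_abs _ _
      _ = ∑ j ∈ Wᶜ, |θ j| :=
          Finset.sum_congr rfl fun j _ => by
            rcases hx i₀ j with h | h <;> simp [h, abs_mul]
  have hWc_card : ((Wᶜ : Finset (Fin p)).card : ℝ) ≤ (1/1000 : ℝ) * p := by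
    have h1 : W.card ≤ p := by simpa using W.card_le_card (Finset.subset_univ W)
    have h2 : ((Wᶜ : Finset (Fin p)).card : ℝ) = (p : ℝ) - W.card := by
      rw [Finset.card_compl, Fintype.card_fin, Nat.cast_sub h1]
    rw [h2]; linarith
  have hWc_sq : ∑ j ∈ Wᶜ, (θ j)^2 ≤ ∑ j, (θ j)^2 :=
    Finset.sum_le_univ_sum_of_nonneg fun j => sq_nonneg _
  have hcsWc : (∑ j ∈ Wᶜ, |θ j|)^2 ≤ ((Wᶜ : Finset (Fin p)).card : ℝ) * ∑ j ∈ Wᶜ, (θ j)^2 := by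
    have := sq_sum_le_card_mul_sum_sq (s := (Wᶜ : Finset (Fin p))) (f := fun j => |θ j|)
    simpa [sq_abs] using this
  have hWcpos : (0:ℝ) ≤ ∑ j ∈ Wᶜ, |θ j| := Finset.sum_nonneg fun j _ => abs_nonneg _
  have hWcsq_nonneg : (0:ℝ) ≤ ∑ j ∈ Wᶜ, (θ j)^2 := Finset.sum_nonneg fun j _ => sq_nonneg _
  have hoffsmall : ∑ j ∈ Wᶜ, |θ j| ≤ 0.0332 := by
    have hb : (∑ j ∈ Wᶜ, |θ j|)^2 ≤ (1/1000 : ℝ) * p * (1.1 / p) := by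
      calc (∑ j ∈ Wᶜ, |θ j|)^2 ≤ ((Wᶜ : Finset (Fin p)).card : ℝ) * ∑ j ∈ Wᶜ, (θ j)^2 := hcsWc
        _ ≤ (1/1000 : ℝ) * p * (1.1 / p) := by
            apply mul_le_mul hWc_card (le_of_lt (lt_of_le_of_lt hWc_sq hθ2)) hWcsq_nonneg
            positivity
    have hval : (1/1000 : ℝ) * p * (1.1 / p) = 0.0011 := by
      field_simp; ring
    rw [hval] at hb
    nlinarith
  -- consensus part bounded by agreement coordinates
  have hA : ∑ j ∈ W, s j * θ j ≤ ∑ j ∈ G, |θ j| := by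
    rw [← Finset.sum_filter_add_sum_filter_not W (fun j => 0 < s j * θ j)]
    have h1 : ∑ j ∈ G, s j * θ j ≤ ∑ j ∈ G, |θ j| :=
      Finset.sum_le_sum fun j _ =>
        (le_abs_self _).trans_eq (by rcases hs j with h | h <;> simp [abs_mul, h])
    have h2 : ∑ j ∈ W.filter (fun j => ¬ 0 < s j * θ j), s j * θ j ≤ 0 :=
      Finset.sum_nonpos fun j hj => not_lt.1 (Finset.mem_filter.1 hj).2
    calc ∑ j ∈ G, s j * θ j + ∑ j ∈ W.filter (fun j => ¬ 0 < s j * θ j), s j * θ j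
        ≤ ∑ j ∈ G, |θ j| + 0 := add_le_add h1 h2
      _ = ∑ j ∈ G, |θ j| := add_zero _
  have hG_sq : ∑ j ∈ G, (θ j)^2 ≤ ∑ j, (θ j)^2 :=
    Finset.sum_le_univ_sum_of_nonneg fun j => sq_nonneg _
  have hG_sq_nonneg : (0:ℝ) ≤ ∑ j ∈ G, (θ j)^2 := Finset.sum_nonneg fun j _ => sq_nonneg _
  have hcsG : (∑ j ∈ G, |θ j|)^2 ≤ (G.card : ℝ) * ∑ j ∈ G, (θ j)^2 := by
    have := sq_sum_le_card_mul_sum_sq (s := G) (f := fun j => |θ j|)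
    simpa [sq_abs] using this
  have hGcard_nonneg : (0:ℝ) ≤ (G.card : ℝ) := Nat.cast_nonneg _
  have hGbound : (∑ j ∈ G, |θ j|)^2 ≤ 0.825 := by
    have hb : (G.card : ℝ) * ∑ j ∈ G, (θ j)^2 ≤ (3/4 * p) * (1.1 / p) := by
      apply mul_le_mul hcontra.le (le_of_lt (lt_of_le_of_lt hG_sq hθ2)) hG_sq_nonneg
      positivity
    have hval : (3/4 : ℝ) * p * (1.1 / p) = 0.825 := by field_simp; ring
    rw [hval] at hb
    linarith
  have hGnonneg : (0:ℝ) ≤ ∑ j ∈ G, |θ j| := Finset.sum_nonneg fun j _ => abs_nonneg _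
  -- combine
  have hbig : (0.9336 : ℝ) ≤ ∑ j ∈ G, |θ j| := by
    have h1 : S ≤ ∑ j ∈ G, |θ j| + ∑ j ∈ Wᶜ, |θ j| := by
      rw [hsplit]
      have := (le_abs_self (∑ j ∈ Wᶜ, x i₀ j * θ j)).trans hoff
      linarith
    linarith
  have hfin : (0.9336:ℝ)^2 ≤ (∑ j ∈ G, |θ j|)^2 := pow_le_pow_left₀ (by norm_num) hbig 2
  norm_num at hfin
  linarith
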